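/- For m with m/2 ≥ 3 even, in A_{m+1} let a = (1 2 ⋯ m+1) and b = (1, m+1)(2, m)⋯(m/2, m/2+2). Then b ∈ A_{m+1}, b² = 1, b a b = a^{-1}, and ⟨a,b⟩ ≅ D_{2(m+1)} is a dihedral subgroup of A_{m+1} of order 2(m+1) with ⟨a,b⟩ ∩ A_m = ⟨b⟩ of order 2, and A_{m+1} = A_m · ⟨a,b⟩. -/

import Mathlib

open Equiv
open Fin.NatCast

section Aux

variable {m : ℕ}

private lemma aux_rev_eq (hm : 1 ≤ m) (x : Fin (m+1)) : Fin.rev x = -(x + 1) := by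
  apply Fin.ext
  simp only [Fin.val_rev, Fin.neg_def, Fin.add_def, Fin.val_one']
  rw [Nat.one_mod_eq_one.mpr (by omega)]
  rcases Nat.lt_or_ge x.val m with h | h
  · rw [show (x.val + 1) % (m+1) = x.val + 1 from Nat.mod_eq_of_lt (by omega),
      Nat.mod_eq_of_lt (by omega)]
  · have hx : x.val = m := by omega
    rw [hx]
    simp

private lemma aux_pow_apply (a : Perm (Fin (m+1))) (ha : a = finRotate (m+1)) :
    ∀ (k : ℕ) (x : Fin (m+1)), (a ^ k) x = x + (k : Fin (m+1)) := by
  intro k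
  induction k with
  | zero => simp
  | succ k ih =>
    intro x
    rw [pow_succ, Equiv.Perm.mul_apply, ih, ha, finRotate_succ_apply]
    push_cast
    open Fin.CommRing in ring

private lemma aux_orderOf (a : Perm (Fin (m+1))) (ha : a = finRotate (m+1)) :
    orderOf a = m + 1 := by
  rw [orderOf_eq_iff (by omega)]
  constructor
  · ext x
    rw [aux_pow_apply a ha]
    have : ((m + 1 : ℕ) : Fin (m+1)) = 0 := by
      apply Fin.ext
      simp [Fin.val_natCast]
    simp [this]
  · intro k hk hk0 h
    have h0 := congrArg (fun f : Perm (Fin (m+1)) => f 0) h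
    simp only [aux_pow_apply a ha, Perm.one_apply, zero_add] at h0
    have := congrArg Fin.val h0
    simp [Fin.val_natCast, Nat.mod_eq_of_lt hk] at this
    omega

end Aux

/-- In `A_{m+1}` (inside `Perm (Fin (m+1))`, `0`-indexed), with `m/2 ≥ 3` even,
let `a = (0 1 ⋯ m)` be the full rotation and `b : x ↦ m - x` the reflection
(a product of `m/2` transpositions fixing the point `m/2`).  Then `a, b` are
even, `b² = 1`, `b a b = a⁻¹`, `D = ⟨a, b⟩` is dihedral of order `2(m+1)`,
`A_m ∩ D = ⟨b⟩` where `A_m` is the point stabilizer in `A_{m+1}` of the fixed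
point of `b`, and `A_{m+1} = A_m · D`. -/
theorem stmt_11 (m : ℕ) (hm : 3 ≤ m / 2) (hme : Even (m / 2)) (hm2 : Even m)
    (a b : Equiv.Perm (Fin (m + 1)))
    (ha : a = finRotate (m + 1)) (hb : b = Fin.revPerm)
    (D Am : Subgroup (Equiv.Perm (Fin (m + 1))))
    (hD : D = Subgroup.closure {a, b})
    (hAm : Am = alternatingGroup (Fin (m + 1)) ⊓
        MulAction.stabilizer (Equiv.Perm (Fin (m + 1))) ((m / 2 : ℕ) : Fin (m + 1))) :
    a ∈ alternatingGroup (Fin (m + 1)) ∧ b ∈ alternatingGroup (Fin (m + 1)) ∧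
      b ^ 2 = 1 ∧ b * a * b = a⁻¹ ∧
      Nat.card D = 2 * (m + 1) ∧ Nonempty (D ≃* DihedralGroup (m + 1)) ∧
      Am ⊓ D = Subgroup.zpowers b ∧
      ∀ σ ∈ alternatingGroup (Fin (m + 1)), ∃ g ∈ Am, ∃ d ∈ D, σ = g * d := by
  have hm6 : 6 ≤ m := by omega
  obtain ⟨m2, hm2'⟩ := hm2
  set p : Fin (m + 1) := ((m / 2 : ℕ) : Fin (m + 1)) with hp
  have hpval : p.val = m / 2 := by
    rw [hp, Fin.val_natCast, Nat.mod_eq_of_lt (by omega)]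
  -- basic action facts
  have hbapp : ∀ x : Fin (m+1), b x = -(x + 1) := by
    intro x; rw [hb]; exact aux_rev_eq (by omega) x
  have hapow := aux_pow_apply a ha
  have haapp : ∀ x : Fin (m+1), a x = x + 1 := by
    intro x; rw [ha, finRotate_succ_apply]
  have horder : orderOf a = m + 1 := aux_orderOf a ha
  -- b^2 = 1
  have hb2 : b ^ 2 = 1 := by
    ext x
    simp [sq, Perm.mul_apply, hb]
  have hbb : b * b = 1 := by rw [← sq]; exact hb2
  -- b a b = a⁻¹
  have hbab : b * a * b = a⁻¹ := by
    have h1 : a * (b * a * b) = 1 := by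
      ext x
      simp only [Perm.mul_apply, Perm.one_apply, hbapp, haapp]
      open Fin.CommRing in ring
    exact (inv_eq_of_mul_eq_one_right h1).symm
  -- a even
  have haA : a ∈ alternatingGroup (Fin (m + 1)) := by
    rw [Equiv.Perm.mem_alternatingGroup, ha, sign_finRotate]
    exact Even.neg_one_pow ⟨m2, hm2'⟩
  -- b fixes p
  have hbp : b p = p := by
    apply Fin.ext
    rw [hb]
    show (Fin.rev p).val = p.val
    rw [Fin.val_rev, hpval]
    omega
  -- fixed points of b
  have hbfix : ∀ x : Fin (m+1), b x = x ↔ x = p := by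
    intro x
    rw [hb]
    show Fin.rev x = x ↔ _
    rw [Fin.ext_iff, Fin.ext_iff, Fin.val_rev, hpval]
    have := x.isLt
    omega
  -- b ≠ 1
  have hbne : b ≠ 1 := by
    intro h
    have := (hbfix 0).mp (by rw [h]; rfl)
    have := congrArg Fin.val this
    simp [hpval] at this
    omega
  have horb : orderOf b = 2 := orderOf_eq_prime hb2 hbne
  -- support of b
  have hsupp : b.support = {p}ᶜ := by
    ext x
    simp [Equiv.Perm.mem_support, hbfix x]
  have hsuppcard : b.support.card = m := by
    rw [hsupp, Finset.card_compl, Finset.card_singleton]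
    simp
  -- cycle type of b
  have hct : ∀ k ∈ b.cycleType, k = 2 := by
    intro k hk
    have h2 : 2 ≤ k := Equiv.Perm.two_le_of_mem_cycleType hk
    have hdvd : k ∣ 2 := by
      rw [← horb, ← Equiv.Perm.lcm_cycleType]
      exact Multiset.dvd_lcm hk
    have := Nat.le_of_dvd (by norm_num) hdvd
    omega
  have hctr : b.cycleType = Multiset.replicate (Multiset.card b.cycleType) 2 :=
    (Multiset.eq_replicate_card).mpr hct
  have hctcard : Multiset.card b.cycleType = m / 2 := by
    have hsum : b.cycleType.sum = m := by rw [Equiv.Perm.sum_cycleType, hsuppcard]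
    rw [hctr, Multiset.sum_replicate, smul_eq_mul] at hsum
    omega
  have hbA : b ∈ alternatingGroup (Fin (m + 1)) := by
    rw [Equiv.Perm.mem_alternatingGroup, Equiv.Perm.sign_of_cycleType,
      Equiv.Perm.sum_cycleType, hsuppcard, hctcard]
    exact Even.neg_one_pow (by exact (Even.add ⟨m2, hm2'⟩ hme))
  -- powers relations
  haveI : NeZero (m + 1) := ⟨by omega⟩
  haveI : Fact (1 < m + 1) := ⟨by omega⟩
  have hpow : ∀ i j : ZMod (m+1), a ^ (i + j).val = a ^ i.val * a ^ j.val := by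
    intro i j
    rw [ZMod.val_add, ← pow_add]
    have h := pow_mod_orderOf a (i.val + j.val)
    rwa [horder] at h
  have hneg : ∀ i : ZMod (m+1), a ^ (-i).val = (a ^ i.val)⁻¹ := by
    intro i
    have : a ^ i.val * a ^ (-i).val = 1 := by
      rw [← hpow, add_neg_cancel]
      simp
    exact (inv_eq_of_mul_eq_one_right this).symm
  have hbinv : b⁻¹ = b := inv_eq_of_mul_eq_one_right hbb
  have hconj : ∀ k : ℕ, b * a ^ k * b = (a ^ k)⁻¹ := by
    intro k
    calc b * a ^ k * b = (b * a * b⁻¹) ^ k := by rw [conj_pow, hbinv]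
      _ = (a⁻¹) ^ k := by rw [hbinv, hbab]
      _ = (a ^ k)⁻¹ := (inv_pow a k)
  have hswap : ∀ k : ℕ, a ^ k * b = b * (a ^ k)⁻¹ := by
    intro k
    calc a ^ k * b = b * (b * a ^ k * b) := by
          rw [← mul_assoc, ← mul_assoc, hbb, one_mul]
      _ = b * (a ^ k)⁻¹ := by rw [hconj]
  -- the dihedral homomorphism
  let f : DihedralGroup (m + 1) → Perm (Fin (m + 1)) := fun x =>
    match x with
    | .r i => a ^ i.val
    | .sr i => b * a ^ i.val
  have hcomm : ∀ s t : ℕ, (a ^ s)⁻¹ * a ^ t = a ^ t * (a ^ s)⁻¹ := fun s t =>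
    ((Commute.pow_pow_self a s t).inv_left).eq
  have hf_mul : ∀ x y, f (x * y) = f x * f y := by
    rintro (i | i) (j | j)
    · exact hpow i j
    · show b * a ^ (j - i).val = a ^ i.val * (b * a ^ j.val)
      have hr : a ^ i.val * (b * a ^ j.val) = b * (a ^ j.val * (a ^ i.val)⁻¹) := by
        rw [← mul_assoc, hswap, mul_assoc, hcomm]
      rw [hr, sub_eq_add_neg j i, hpow, hneg]
    · show b * a ^ (i + j).val = (b * a ^ i.val) * a ^ j.val
      rw [hpow, mul_assoc]
    · show a ^ (j - i).val = (b * a ^ i.val) * (b * a ^ j.val)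
      have assoc1 : (b * a ^ i.val) * (b * a ^ j.val) = b * ((a ^ i.val * b) * a ^ j.val) := by
        simp only [mul_assoc]
      have hr : b * ((a ^ i.val * b) * a ^ j.val) = (a ^ i.val)⁻¹ * a ^ j.val := by
        rw [hswap, ← mul_assoc, ← mul_assoc, hbb, one_mul]
      rw [assoc1, hr, sub_eq_add_neg j i, hpow, hneg, hcomm]
  let φ : DihedralGroup (m + 1) →* Perm (Fin (m + 1)) :=
    { toFun := f
      map_one' := by
        show a ^ (0 : ZMod (m+1)).val = 1
        simp
      map_mul' := hf_mul }
  have hφr : ∀ i : ZMod (m+1), φ (.r i) = a ^ i.val := fun _ => rfl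
  have hφsr : ∀ i : ZMod (m+1), φ (.sr i) = b * a ^ i.val := fun _ => rfl
  have hinj : Function.Injective φ := by
    rw [injective_iff_map_eq_one]
    rintro (i | i) h
    · rw [hφr] at h
      have := orderOf_dvd_of_pow_eq_one h
      rw [horder] at this
      have hlt : i.val < m + 1 := ZMod.val_lt i
      have : i.val = 0 := by
        rcases Nat.eq_zero_or_pos i.val with h0 | h0
        · exact h0
        · exact absurd (Nat.le_of_dvd h0 this) (by omega)
      rw [DihedralGroup.one_def]
      congr 1
      exact (ZMod.val_eq_zero i).mp this
    · exfalso
      rw [hφsr] at h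
      have hbeq : b = (a ^ i.val)⁻¹ := by
        rw [← one_mul ((a ^ i.val)⁻¹), ← h]
        group
      have hcomm2 : Commute a b := by
        rw [hbeq]
        exact ((Commute.refl a).pow_right i.val).inv_right
      have : a⁻¹ = a := by
        rw [← hbab, ← hcomm2.eq, mul_assoc, hbb, mul_one]
      have ha2 : a ^ 2 = 1 := by
        rw [sq]
        nth_rewrite 1 [← this]
        exact inv_mul_cancel a
      have := orderOf_dvd_of_pow_eq_one ha2
      rw [horder] at this
      have := Nat.le_of_dvd (by norm_num) this
      omega
  have hrange : φ.range = D := by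
    apply le_antisymm
    · rintro x ⟨(i | i), rfl⟩
      · rw [hφr, hD]
        exact pow_mem (Subgroup.subset_closure (by simp)) _
      · rw [hφsr, hD]
        exact mul_mem (Subgroup.subset_closure (by simp))
          (pow_mem (Subgroup.subset_closure (by simp)) _)
    · rw [hD, Subgroup.closure_le]
      rintro x (rfl | rfl)
      · exact ⟨.r 1, by rw [hφr, ZMod.val_one, pow_one]⟩
      · exact ⟨.sr 0, by rw [hφsr, ZMod.val_zero, pow_zero, mul_one]⟩
  have e : D ≃* DihedralGroup (m + 1) :=
    (MulEquiv.subgroupCongr hrange.symm).trans (MonoidHom.ofInjective hinj).symm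
  have hcard : Nat.card D = 2 * (m + 1) := by
    rw [Nat.card_congr e.toEquiv, DihedralGroup.nat_card]
  -- membership characterization of D
  have hmemD : ∀ x ∈ D, ∃ k : ℕ, x = a ^ k ∨ x = b * a ^ k := by
    intro x hx
    rw [← hrange] at hx
    obtain ⟨(i | i), rfl⟩ := hx
    · exact ⟨i.val, Or.inl (hφr i)⟩
    · exact ⟨i.val, Or.inr (hφsr i)⟩
  -- cast-zero facts
  have hcastzero : ∀ k : ℕ, ((k : Fin (m+1)) = 0) → a ^ k = 1 := by
    intro k hk
    have : k % (m + 1) = 0 := by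
      have := congrArg Fin.val hk
      simpa [Fin.val_natCast] using this
    have h := pow_mod_orderOf a k
    rw [horder, this, pow_zero] at h
    exact h.symm
  -- intersection
  have hinter : Am ⊓ D = Subgroup.zpowers b := by
    apply le_antisymm
    · intro x hx
      rw [Subgroup.mem_inf, hAm, Subgroup.mem_inf] at hx
      obtain ⟨⟨-, hxstab⟩, hxD⟩ := hx
      have hxp : x p = p := hxstab
      obtain ⟨k, (rfl | rfl)⟩ := hmemD x hxD
      · rw [hapow] at hxp
        have : (k : Fin (m+1)) = 0 := by
          rwa [add_eq_left] at hxp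
        rw [hcastzero k this]
        exact one_mem _
      · rw [Perm.mul_apply, hapow] at hxp
        have h1 : p + (k : Fin (m+1)) = p := by
          have := congrArg b hxp
          rwa [← Perm.mul_apply, hbb, Perm.one_apply, hbp] at this
        have : (k : Fin (m+1)) = 0 := by rwa [add_eq_left] at h1
        rw [hcastzero k this, mul_one]
        exact Subgroup.mem_zpowers b
    · rw [Subgroup.zpowers_le]
      refine ⟨?_, ?_⟩
      · rw [hAm]
        exact ⟨hbA, hbp⟩
      · rw [hD]
        exact Subgroup.subset_closure (by simp)
  -- factorization
  refine ⟨haA, hbA, hb2, hbab, hcard, ⟨e⟩, hinter, ?_⟩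
  intro σ hσ
  set t : Fin (m+1) := σ⁻¹ p with ht
  set k : Fin (m+1) := p - t with hk
  have hdt : (a ^ k.val) t = p := by
    rw [hapow, Fin.cast_val_eq_self, hk]
    open Fin.CommRing in ring
  refine ⟨σ * (a ^ k.val)⁻¹, ?_, a ^ k.val, ?_, by group⟩
  · rw [hAm, Subgroup.mem_inf]
    refine ⟨mul_mem hσ (inv_mem (pow_mem haA _)), ?_⟩
    rw [MulAction.mem_stabilizer_iff]
    show (σ * (a ^ k.val)⁻¹) p = p
    rw [Perm.mul_apply]
    have h2 : (a ^ k.val)⁻¹ p = σ⁻¹ p := by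
      conv_lhs => rw [← hdt, Perm.coe_inv, Equiv.symm_apply_apply]
    rw [h2, Perm.coe_inv, Equiv.apply_symm_apply]
  · rw [hD]
    exact pow_mem (Subgroup.subset_closure (by simp)) _
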